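/- arXiv:1807.01260 — 4 statements merged into one kernel-verified Lean document; each statement's English description precedes it below -/
import Mathlib

section
/- Let γ be a center of T w.r.t. c and let a, b be the endpoints of a diametral path P of T w.r.t. c. Then γ is a center of P, i.e., γ lies on the path P between a and b, and γ minimizes max{d_T(u,a) + c(a), d_T(u,b) + c(b)} over all vertices u of P. -/
open SimpleGraph

/-- `mid` lies on the (unique) path between `u` and `v` in the tree `T`. -/
def OnPath {V : Type*} (T : SimpleGraph V) (u mid v : V) : Prop :=
  T.dist u mid + T.dist mid v = T.dist u v

/-- In a tree, every path realizes the distance between its endpoints. -/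
lemma tree_path_length {V : Type*} {T : SimpleGraph V} (hT : T.IsTree) {u v : V}
    (p : T.Walk u v) (hp : p.IsPath) : p.length = T.dist u v := by
  classical
  obtain ⟨w, hw⟩ := hT.isConnected.exists_walk_length_eq_dist u v
  have hb : p = w.bypass := (hT.existsUnique_path u v).unique hp w.bypass_isPath
  exact le_antisymm (by rw [hb, ← hw]; exact w.length_bypass_le) (SimpleGraph.dist_le p)

/-- In a tree, a vertex on a path splits the distance. -/
lemma dist_add_of_mem {V : Type*} {T : SimpleGraph V} (hT : T.IsTree) {u v x : V}
    (p : T.Walk u v) (hp : p.IsPath) (hx : x ∈ p.support) :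
    T.dist u x + T.dist x v = T.dist u v := by
  classical
  rw [← tree_path_length hT _ (hp.takeUntil hx), ← tree_path_length hT _ (hp.dropUntil hx),
    ← tree_path_length hT p hp, ← Walk.length_append, Walk.take_spec]

lemma takeUntil_cons' {V : Type*} [DecidableEq V] {T : SimpleGraph V} {u x w m : V}
    (r : T.Adj u x) (p : T.Walk x w) (hm' : m ∈ p.support)
    (hm : m ∈ (Walk.cons r p).support) (hum : u ≠ m) :
    (Walk.cons r p).takeUntil m hm = Walk.cons r (p.takeUntil m hm') := by
  simp [Walk.takeUntil, hum]

lemma proj_core {V : Type*} [DecidableEq V] {T : SimpleGraph V} (S : List V) :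
    ∀ {u w : V} (pw : T.Walk u w), pw.IsPath → w ∈ S →
      ∃ (m : V) (hmS : m ∈ S) (hmp : m ∈ pw.support),
        ∀ v ∈ (pw.takeUntil m hmp).support, v ∈ S → v = m := by
  have support_self : ∀ {z : V} (q : T.Walk z z), q.IsPath → q.support = [z] := by
    intro z q hq
    rw [(Walk.isPath_iff_eq_nil).mp hq, Walk.support_nil]
  intro u w pw
  induction pw with
  | nil =>
    intro _ hwS
    refine ⟨_, hwS, Walk.start_mem_support _, ?_⟩
    intro v hv _
    rw [support_self _ (Walk.IsPath.nil.takeUntil _)] at hv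
    simpa using hv
  | @cons u x w r p ih =>
    intro hp hwS
    by_cases huS : u ∈ S
    · refine ⟨u, huS, Walk.start_mem_support _, ?_⟩
      intro v hv _
      rw [support_self _ (hp.takeUntil _)] at hv
      simpa using hv
    · obtain ⟨m, hmS, hmp, hprop⟩ := ih hp.of_cons hwS
      have hum : u ≠ m := fun e => huS (e ▸ hmS)
      have hmc : m ∈ (Walk.cons r p).support := by
        rw [Walk.support_cons]; exact List.mem_cons_of_mem _ hmp
      refine ⟨m, hmS, hmc, ?_⟩
      intro v hv hvS
      rw [takeUntil_cons' r p hmp hmc hum, Walk.support_cons] at hv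
      rcases List.mem_cons.mp hv with rfl | hv'
      · exact absurd hvS huS
      · exact hprop v hv' hvS

/-- Projection of a vertex onto a path in a tree. -/
lemma tree_proj {V : Type*} {T : SimpleGraph V} (hT : T.IsTree) {a b : V}
    (P : T.Walk a b) (hP : P.IsPath) (u : V) :
    ∃ m, m ∈ P.support ∧ T.dist u m + T.dist m a = T.dist u a ∧
      T.dist u m + T.dist m b = T.dist u b := by
  classical
  obtain ⟨pa, hpa, -⟩ := hT.existsUnique_path u a
  obtain ⟨m, hmP, hmp, hprop⟩ := proj_core P.support pa hpa (by { have : a ∈ P.support := P.start_mem_support; exact this })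
  refine ⟨m, hmP, dist_add_of_mem hT pa hpa hmp, ?_⟩
  set s := pa.takeUntil m hmp with hs_def
  set t := P.dropUntil m hmP with ht_def
  have hs : s.IsPath := hpa.takeUntil hmp
  have ht : t.IsPath := hP.dropUntil hmP
  have hdisj : ∀ v ∈ s.support, v ∉ t.support.tail := by
    intro v hv hv'
    have hvt : v ∈ t.support := List.mem_of_mem_tail hv'
    have hvm : v = m := hprop v hv (P.support_dropUntil_subset hmP hvt)
    subst hvm
    have hnd : t.support.Nodup := (Walk.isPath_def t).mp ht
    rw [t.support_eq_cons] at hnd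
    exact (List.nodup_cons.mp hnd).1 hv'
  have hw : (s.append t).IsPath := by
    rw [Walk.isPath_def, Walk.support_append]
    refine List.Nodup.append ((Walk.isPath_def s).mp hs)
      (((Walk.isPath_def t).mp ht).tail) ?_
    intro v hv hv'
    exact hdisj v hv hv'
  have h3 := tree_path_length hT _ hw
  rw [Walk.length_append, tree_path_length hT s hs, tree_path_length hT t ht] at h3
  exact h3

/-- If `γ` is a center of `T` w.r.t. `c` and `a, b` are the endpoints of
a diametral path `P` of `T` w.r.t. `c`, then `γ` is a center of `P`: it lies on the path
between `a` and `b` and it minimizes `max{d_T(u,a)+c(a), d_T(u,b)+c(b)}` over the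
vertices `u` of `P`. -/
theorem stmt_3 {V : Type*} [Fintype V] [Nonempty V] (T : SimpleGraph V) (hT : T.IsTree)
    (c : V → EReal) (hcTop : ∀ y : V, c y ≠ ⊤) (hfin : ∃ y : V, c y ≠ ⊥)
    (γ a b : V)
    (hγ : ∀ u : V, (⨆ y : V, (((T.dist γ y : ℝ) : EReal) + c y)) ≤
      ⨆ y : V, (((T.dist u y : ℝ) : EReal) + c y))
    (hab : ∀ a' b' : V, c a' + ((T.dist a' b' : ℝ) : EReal) + c b' ≤
      c a + ((T.dist a b : ℝ) : EReal) + c b) :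
    OnPath T a γ b ∧
    ∀ u : V, OnPath T a u b →
      max (((T.dist γ a : ℝ) : EReal) + c a) (((T.dist γ b : ℝ) : EReal) + c b) ≤
        max (((T.dist u a : ℝ) : EReal) + c a) (((T.dist u b : ℝ) : EReal) + c b) := by
  classical
  obtain ⟨P, hP, -⟩ := hT.existsUnique_path a b
  obtain ⟨y0, hy0⟩ := hfin
  -- c a and c b are finite
  have h0 := hab y0 y0
  rw [SimpleGraph.dist_self] at h0
  have hrhs : c a + ((T.dist a b : ℝ) : EReal) + c b ≠ ⊥ := by
    intro h
    rw [h, le_bot_iff] at h0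
    have : c y0 + ((0 : ℕ) : ℝ) + c y0 ≠ ⊥ := by
      simp only [Nat.cast_zero, EReal.coe_zero, add_zero]
      intro hc
      rcases EReal.add_eq_bot_iff.mp hc with h' | h' <;> exact hy0 h'
    exact this h0
  have hbotA : c a ≠ ⊥ := by
    intro h; apply hrhs; rw [h, EReal.bot_add, EReal.bot_add]
  have hbotB : c b ≠ ⊥ := by
    intro h; apply hrhs; rw [h, EReal.add_bot]
  have hCa : ((c a).toReal : EReal) = c a := EReal.coe_toReal (hcTop a) hbotA
  have hCb : ((c b).toReal : EReal) = c b := EReal.coe_toReal (hcTop b) hbotB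
  set Ca := (c a).toReal with hCa_def
  set Cb := (c b).toReal with hCb_def
  -- diametrality in real form
  have hdiamA : ∀ y : V, ∀ Cy : ℝ, ((Cy : EReal) = c y) →
      (T.dist a y : ℝ) + Cy ≤ (T.dist a b : ℝ) + Cb := by
    intro y Cy hCy
    have h := hab a y
    rw [← hCa, ← hCb, ← hCy] at h
    have h' : Ca + (T.dist a y : ℝ) + Cy ≤ Ca + (T.dist a b : ℝ) + Cb := by
      exact_mod_cast h
    linarith
  have hdiamB : ∀ y : V, ∀ Cy : ℝ, ((Cy : EReal) = c y) →
      (T.dist y b : ℝ) + Cy ≤ (T.dist a b : ℝ) + Ca := by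
    intro y Cy hCy
    have h := hab y b
    rw [← hCa, ← hCb, ← hCy] at h
    have h' : Cy + (T.dist y b : ℝ) + Cb ≤ Ca + (T.dist a b : ℝ) + Cb := by
      exact_mod_cast h
    linarith
  -- Key: eccentricity is attained at a diametral endpoint
  have keyA : ∀ u y : V, ((T.dist u y : ℝ) : EReal) + c y ≤
      max (((T.dist u a : ℝ) : EReal) + c a) (((T.dist u b : ℝ) : EReal) + c b) := by
    intro u y
    by_cases hy : c y = ⊥
    · rw [hy, EReal.add_bot]; exact bot_le
    have hCy : ((c y).toReal : EReal) = c y := EReal.coe_toReal (hcTop y) hy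
    set Cy := (c y).toReal with hCy_def
    obtain ⟨m, hmP, hm1, hm2⟩ := tree_proj hT P hP u
    obtain ⟨n, hnP, hn1, hn2⟩ := tree_proj hT P hP y
    have hmab : T.dist a m + T.dist m b = T.dist a b := dist_add_of_mem hT P hP hmP
    have hnab : T.dist a n + T.dist n b = T.dist a b := dist_add_of_mem hT P hP hnP
    have htr1 : T.dist u y ≤ T.dist u n + T.dist n y := hT.isConnected.dist_triangle
    have htr2 : T.dist u n ≤ T.dist u m + T.dist m n := hT.isConnected.dist_triangle
    have hcay : T.dist a y = T.dist y a := T.dist_comm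
    have hcny : T.dist n y = T.dist y n := T.dist_comm
    have hcan : T.dist a n = T.dist n a := T.dist_comm
    have hcyb : T.dist y b = T.dist n y + T.dist n b := by
      rw [hcny]; exact hn2.symm
    have hsplit : n ∈ (P.takeUntil m hmP).support ∨ n ∈ (P.dropUntil m hmP).support := by
      have h := hnP
      rw [← Walk.take_spec P hmP] at h
      exact (Walk.mem_support_append_iff _ _).mp h
    rcases hsplit with hn | hn
    · -- n on segment a..m : bound by the `a` term
      refine le_trans ?_ (le_max_left _ _)
      rw [← hCa, ← hCy, ← EReal.coe_add, ← EReal.coe_add, EReal.coe_le_coe_iff]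
      have hseg : T.dist a n + T.dist n m = T.dist a m :=
        dist_add_of_mem hT _ (hP.takeUntil hmP)
          ((by exact hn) : n ∈ (P.takeUntil m hmP).support)
      have hD := hdiamB y Cy hCy
      have hcmn : T.dist m n = T.dist n m := T.dist_comm
      -- d(n,y)+Cy ≤ d(n,a)+Ca
      have hny : (T.dist n y : ℝ) + Cy ≤ (T.dist n a : ℝ) + Ca := by
        have e1 : (T.dist y b : ℝ) = (T.dist n y : ℝ) + (T.dist n b : ℝ) := by
          exact_mod_cast congrArg (Nat.cast : ℕ → ℝ) hcyb
        have e2 : (T.dist a n : ℝ) + (T.dist n b : ℝ) = (T.dist a b : ℝ) := by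
          exact_mod_cast congrArg (Nat.cast : ℕ → ℝ) hnab
        have e3 : (T.dist a n : ℝ) = (T.dist n a : ℝ) := by exact_mod_cast congrArg (Nat.cast : ℕ → ℝ) hcan
        linarith
      have e4 : (T.dist u y : ℝ) ≤ (T.dist u m : ℝ) + (T.dist m n : ℝ) + (T.dist n y : ℝ) := by
        have := le_trans htr1 (Nat.add_le_add_right htr2 _)
        exact_mod_cast this
      have e5 : (T.dist a n : ℝ) + (T.dist n m : ℝ) = (T.dist a m : ℝ) := by
        exact_mod_cast congrArg (Nat.cast : ℕ → ℝ) hseg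
      have e6 : (T.dist u m : ℝ) + (T.dist m a : ℝ) = (T.dist u a : ℝ) := by
        exact_mod_cast congrArg (Nat.cast : ℕ → ℝ) hm1
      have e7 : (T.dist m n : ℝ) = (T.dist n m : ℝ) := by
        exact_mod_cast congrArg (Nat.cast : ℕ → ℝ) hcmn
      have e8 : (T.dist a n : ℝ) = (T.dist n a : ℝ) := by
        exact_mod_cast congrArg (Nat.cast : ℕ → ℝ) hcan
      have e9 : (T.dist a m : ℝ) = (T.dist m a : ℝ) := by
        exact_mod_cast congrArg (Nat.cast : ℕ → ℝ) (T.dist_comm : T.dist a m = T.dist m a)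
      linarith
    · -- n on segment m..b : bound by the `b` term
      refine le_trans ?_ (le_max_right _ _)
      rw [← hCb, ← hCy, ← EReal.coe_add, ← EReal.coe_add, EReal.coe_le_coe_iff]
      have hseg : T.dist m n + T.dist n b = T.dist m b :=
        dist_add_of_mem hT _ (hP.dropUntil hmP)
          ((by exact hn) : n ∈ (P.dropUntil m hmP).support)
      have hD := hdiamA y Cy hCy
      -- d(n,y)+Cy ≤ d(n,b)+Cb
      have hny : (T.dist n y : ℝ) + Cy ≤ (T.dist n b : ℝ) + Cb := by
        have e1 : (T.dist a y : ℝ) = (T.dist a n : ℝ) + (T.dist n y : ℝ) := by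
          have : T.dist a y = T.dist a n + T.dist n y := by
            rw [hcay, hcan, hcny] at *
            omega
          exact_mod_cast congrArg (Nat.cast : ℕ → ℝ) this
        have e2 : (T.dist a n : ℝ) + (T.dist n b : ℝ) = (T.dist a b : ℝ) := by
          exact_mod_cast congrArg (Nat.cast : ℕ → ℝ) hnab
        linarith
      have e4 : (T.dist u y : ℝ) ≤ (T.dist u m : ℝ) + (T.dist m n : ℝ) + (T.dist n y : ℝ) := by
        have := le_trans htr1 (Nat.add_le_add_right htr2 _)
        exact_mod_cast this
      have e5 : (T.dist m n : ℝ) + (T.dist n b : ℝ) = (T.dist m b : ℝ) := by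
        exact_mod_cast congrArg (Nat.cast : ℕ → ℝ) hseg
      have e6 : (T.dist u m : ℝ) + (T.dist m b : ℝ) = (T.dist u b : ℝ) := by
        exact_mod_cast congrArg (Nat.cast : ℕ → ℝ) hm2
      linarith
  -- eccentricity equals the max over the two endpoints
  have eccle : ∀ u : V, (⨆ y : V, (((T.dist u y : ℝ) : EReal) + c y)) ≤
      max (((T.dist u a : ℝ) : EReal) + c a) (((T.dist u b : ℝ) : EReal) + c b) :=
    fun u => iSup_le (keyA u)
  have eccge : ∀ u : V,
      max (((T.dist u a : ℝ) : EReal) + c a) (((T.dist u b : ℝ) : EReal) + c b) ≤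
        ⨆ y : V, (((T.dist u y : ℝ) : EReal) + c y) :=
    fun u => max_le (le_iSup (fun y => (((T.dist u y : ℝ) : EReal) + c y)) a)
      (le_iSup (fun y => (((T.dist u y : ℝ) : EReal) + c y)) b)
  have part2 : ∀ u : V,
      max (((T.dist γ a : ℝ) : EReal) + c a) (((T.dist γ b : ℝ) : EReal) + c b) ≤
        max (((T.dist u a : ℝ) : EReal) + c a) (((T.dist u b : ℝ) : EReal) + c b) :=
    fun u => le_trans (eccge γ) (le_trans (hγ u) (eccle u))
  refine ⟨?_, fun u _ => part2 u⟩
  -- Part 1: γ is on the path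
  obtain ⟨m, hmP, hm1, hm2⟩ := tree_proj hT P hP γ
  have hmab : T.dist a m + T.dist m b = T.dist a b := dist_add_of_mem hT P hP hmP
  by_cases hgm : γ = m
  · show T.dist a γ + T.dist γ b = T.dist a b
    rw [hgm]
    exact hmab
  · exfalso
    have hd1 : 1 ≤ T.dist γ m :=
      (hT.isConnected γ m).pos_dist_of_ne hgm
    have key := le_trans (part2 m) (by exact le_refl _)
    -- turn into a real inequality
    rw [← hCa, ← hCb] at key
    have hmax : ∀ x y : ℝ, max ((x : EReal)) ((y : EReal)) = ((max x y : ℝ) : EReal) := by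
      intro x y
      rcases le_total x y with h | h
      · rw [max_eq_right h, max_eq_right (EReal.coe_le_coe_iff.mpr h)]
      · rw [max_eq_left h, max_eq_left (EReal.coe_le_coe_iff.mpr h)]
    rw [← EReal.coe_add, ← EReal.coe_add, ← EReal.coe_add, ← EReal.coe_add,
      hmax, hmax, EReal.coe_le_coe_iff] at key
    have hA := le_trans (le_max_left _ _) key
    have hB := le_trans (le_max_right _ _) key
    have e1 : (T.dist γ a : ℝ) = (T.dist γ m : ℝ) + (T.dist m a : ℝ) := by
      exact_mod_cast congrArg (Nat.cast : ℕ → ℝ) hm1.symm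
    have e2 : (T.dist γ b : ℝ) = (T.dist γ m : ℝ) + (T.dist m b : ℝ) := by
      exact_mod_cast congrArg (Nat.cast : ℕ → ℝ) hm2.symm
    have e3 : (1 : ℝ) ≤ (T.dist γ m : ℝ) := by exact_mod_cast hd1
    rcases le_total ((T.dist m a : ℝ) + Ca) ((T.dist m b : ℝ) + Cb) with h | h
    · rw [max_eq_right h] at hA hB
      linarith
    · rw [max_eq_left h] at hA hB
      linarith
end

section
/- Let a', b' be the two endpoints of a diametral path of T w.r.t. a cost function c', let t be a vertex on the path between a' and b' (so d_T(a',b') = d_T(a',t) + d_T(t,b')), and let a be any vertex whose path to b' passes through t, i.e., d_T(a, b') = d_T(a, t) + d_T(t, b'). Then c'(a) + d_T(a, t) ≤ c'(a') + d_T(a', t). -/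
open SimpleGraph

/-- If `a', b'` are the endpoints of a diametral path of `T` w.r.t. `c'`,
`t` lies on the path between `a'` and `b'`, and the path from `a` to `b'` passes through
`t`, then `c'(a) + d_T(a,t) ≤ c'(a') + d_T(a',t)`. -/
theorem stmt_7 {V : Type*} [Fintype V] (T : SimpleGraph V) (hT : T.IsTree)
    (c' : V → EReal) (hcTop : ∀ y : V, c' y ≠ ⊤)
    (a' b' a t : V)
    (hdiam : ∀ u w : V, c' u + ((T.dist u w : ℝ) : EReal) + c' w ≤
      c' a' + ((T.dist a' b' : ℝ) : EReal) + c' b')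
    (ht : T.dist a' b' = T.dist a' t + T.dist t b')
    (ha : T.dist a b' = T.dist a t + T.dist t b') :
    c' a + ((T.dist a t : ℝ) : EReal) ≤ c' a' + ((T.dist a' t : ℝ) : EReal) := by
  by_cases hb : c' b' = ⊥
  · -- diametral value is ⊥, so c' a = ⊥
    have h := hdiam a a
    rw [hb] at h
    simp only [EReal.add_bot, le_bot_iff] at h
    rcases EReal.add_eq_bot_iff.mp h with h1 | h1
    · rcases EReal.add_eq_bot_iff.mp h1 with h2 | h2
      · rw [h2]; simp
      · simp at h2
    · rw [h1]; simp
  · obtain ⟨r, hr⟩ : ∃ r : ℝ, c' b' = (r : EReal) := by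
      lift c' b' to ℝ using ⟨hcTop b', hb⟩ with r hr
      exact ⟨r, rfl⟩
    have h := hdiam a b'
    rw [ht, ha, hr] at h
    have key : ∀ x : V, c' x + ((T.dist x t + T.dist t b' : ℕ) : ℝ) + (r : EReal)
        = (c' x + ((T.dist x t : ℝ) : EReal)) + (((T.dist t b' : ℝ) + r : ℝ) : EReal) := by
      intro x
      push_cast
      simp [add_assoc]
    rw [key a, key a'] at h
    exact (EReal.addLECancellable_coe _).add_le_add_iff_right.1 h
end

section
/- Let a, b be the two endpoints of a diametral path of T w.r.t. c. Then for every vertex u of T, max_{y ∈ V(T)} (d_T(u,y) + c(y)) = max{d_T(u,a) + c(a), d_T(u,b) + c(b)}; that is, the eccentricity of any vertex is attained at an endpoint of a diametral path. -/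
open SimpleGraph Walk

section Aux

variable {V : Type*} {G : SimpleGraph V}

private lemma tree_path_length_eq_dist (hG : G.IsTree) {u v : V} (p : G.Walk u v)
    (hp : p.IsPath) : p.length = G.dist u v := by
  obtain ⟨q, hq, hlen⟩ := hG.isConnected.exists_path_of_dist u v
  rw [(hG.existsUnique_path u v).unique hp hq, hlen]

private lemma tree_split_dist [DecidableEq V] (hG : G.IsTree) {u v w : V} (p : G.Walk u v)
    (hp : p.IsPath) (h : w ∈ p.support) :
    G.dist u w + G.dist w v = G.dist u v := by
  rw [← tree_path_length_eq_dist hG p hp, ← tree_path_length_eq_dist hG _ (hp.takeUntil h),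
    ← tree_path_length_eq_dist hG _ (hp.dropUntil h), ← Walk.length_append,
    Walk.take_spec p h]

private lemma isPath_append' {u v w : V} {p : G.Walk u v} {q : G.Walk v w}
    (hp : p.IsPath) (hq : q.IsPath)
    (h : ∀ x, x ∈ p.support → x ∈ q.support → x = v) : (p.append q).IsPath := by
  rw [Walk.isPath_def, Walk.support_append, List.nodup_append]
  refine ⟨hp.support_nodup, hq.support_nodup.tail, ?_⟩
  intro x hxp y hxq hxy
  subst hxy
  have hx : x ∈ q.support := List.mem_of_mem_tail hxq
  have := h x hxp hx
  subst this
  have := hq.support_nodup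
  rw [Walk.support_eq_cons] at this
  exact (List.nodup_cons.mp this).1 hxq

private lemma exists_first_mem [DecidableEq V] {a b : V} (P : G.Walk a b) :
    ∀ {v c : V} (Q : G.Walk v c), c ∈ P.support → ∃ (m : V) (h : m ∈ Q.support), m ∈ P.support ∧
      ∀ x ∈ (Q.takeUntil m h).support, x ∈ P.support → x = m := by
  intro v c Q
  induction Q with
  | nil =>
      intro hv
      refine ⟨_, Walk.start_mem_support _, hv, ?_⟩
      intro x hx _
      have := Walk.support_takeUntil_subset _ (Walk.start_mem_support (G := G) Walk.nil) hx
      simpa using this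
  | @cons v w c hadj Q ih =>
      intro hc
      by_cases hv : v ∈ P.support
      · refine ⟨v, Walk.start_mem_support _, hv, ?_⟩
        intro x hx _
        have : (Walk.cons hadj Q).takeUntil v (Walk.start_mem_support _) = Walk.nil := by
          simp [Walk.takeUntil]
        rw [this] at hx
        simpa using hx
      · obtain ⟨m, hmQ, hmP, hfirst⟩ := ih hc
        have hmv : v ≠ m := fun h => hv (h ▸ hmP)
        refine ⟨m, List.mem_cons_of_mem _ hmQ, hmP, ?_⟩
        have : (Walk.cons hadj Q).takeUntil m (List.mem_cons_of_mem _ hmQ)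
            = Walk.cons hadj (Q.takeUntil m hmQ) := by
          simp [Walk.takeUntil, hmv]
        rw [this]
        intro x hx hxP
        rw [Walk.support_cons] at hx
        rcases List.mem_cons.mp hx with hx | hx
        · exact absurd hxP (by simpa [hx] using hv)
        · exact hfirst x hx hxP

private lemma tree_proj_s8 [DecidableEq V] (hG : G.IsTree) {a b : V} (P : G.Walk a b)
    (hP : P.IsPath) (v : V) : ∃ m, m ∈ P.support ∧ G.dist v m + G.dist m a = G.dist v a ∧
      G.dist v m + G.dist m b = G.dist v b := by
  obtain ⟨Q, hQ, _⟩ := hG.isConnected.exists_path_of_dist v a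
  obtain ⟨m, hmQ, hmP, hfirst⟩ := exists_first_mem P Q P.start_mem_support
  refine ⟨m, hmP, ?_, ?_⟩
  · exact tree_split_dist hG Q hQ hmQ
  · set Q1 := Q.takeUntil m hmQ with hQ1def
    have hQ1 : Q1.IsPath := hQ.takeUntil hmQ
    have hP2 : (P.dropUntil m hmP).IsPath := hP.dropUntil hmP
    have hR : (Q1.append (P.dropUntil m hmP)).IsPath := by
      refine isPath_append' hQ1 hP2 ?_
      intro x hx1 hx2
      exact hfirst x hx1 (Walk.support_dropUntil_subset _ hmP hx2)
    have h1 : Q1.length = G.dist v m := tree_path_length_eq_dist hG Q1 hQ1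
    have h2 : (P.dropUntil m hmP).length = G.dist m b := tree_path_length_eq_dist hG _ hP2
    have h3 := tree_path_length_eq_dist hG _ hR
    rw [Walk.length_append, h1, h2] at h3
    exact h3

private lemma tree_collinear [DecidableEq V] (hG : G.IsTree) {a b m m' : V} (P : G.Walk a b)
    (hP : P.IsPath) (hm : m ∈ P.support) (hm' : m' ∈ P.support) :
    G.dist a m' + G.dist m' m = G.dist a m ∨ G.dist a m + G.dist m m' = G.dist a m' := by
  have hsplit : G.dist a m + G.dist m b = G.dist a b := tree_split_dist hG P hP hm
  have hsplit' : G.dist a m' + G.dist m' b = G.dist a b := tree_split_dist hG P hP hm'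
  rw [← Walk.take_spec P hm, Walk.mem_support_append_iff] at hm'
  rcases hm' with h | h
  · exact Or.inl (tree_split_dist hG _ (hP.takeUntil hm) h)
  · have := tree_split_dist hG _ (hP.dropUntil hm) h
    omega

private lemma D_add (m n : ℕ) : (((m + n : ℕ) : ℝ) : EReal) = ((m : ℝ) : EReal) + ((n : ℝ) : EReal) := by
  norm_cast

private lemma D_mono {m n : ℕ} (h : m ≤ n) : ((m : ℝ) : EReal) ≤ ((n : ℝ) : EReal) := by
  exact_mod_cast h

private lemma ereal_cancel_right {x y : EReal} (r : ℝ) (h : x + (r : EReal) ≤ y + (r : EReal)) :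
    x ≤ y :=
  (EReal.addLECancellable_coe r).add_le_add_iff_right.mp h

private lemma ereal_cancel_left {x y : EReal} (r : ℝ) (h : (r : EReal) + x ≤ (r : EReal) + y) :
    x ≤ y :=
  (EReal.addLECancellable_coe r) h

private lemma ereal_chain {p q r s t : ℕ} {x y : EReal}
    (h1 : p ≤ q + r) (h2 : ((r : ℝ) : EReal) + x ≤ ((s : ℝ) : EReal) + y) (h3 : q + s ≤ t) :
    ((p : ℝ) : EReal) + x ≤ ((t : ℝ) : EReal) + y := by
  calc ((p : ℝ) : EReal) + x ≤ (((q + r : ℕ) : ℝ) : EReal) + x :=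
        add_le_add_left (D_mono h1) x
    _ = ((q : ℝ) : EReal) + (((r : ℝ) : EReal) + x) := by rw [D_add, add_assoc]
    _ ≤ ((q : ℝ) : EReal) + (((s : ℝ) : EReal) + y) := add_le_add_right h2 _
    _ = (((q + s : ℕ) : ℝ) : EReal) + y := by rw [D_add, add_assoc]
    _ ≤ ((t : ℝ) : EReal) + y := add_le_add_left (D_mono h3) y

end Aux

/-- If `a, b` are the endpoints of a diametral path of `T` w.r.t. `c`,
then for every vertex `u`, the eccentricity `max_y (d_T(u,y) + c(y))` equals
`max{d_T(u,a) + c(a), d_T(u,b) + c(b)}`. -/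
theorem stmt_8 {V : Type*} [Fintype V] [Nonempty V] (T : SimpleGraph V) (hT : T.IsTree)
    (c : V → EReal) (hcTop : ∀ y : V, c y ≠ ⊤)
    (a b : V)
    (hab : ∀ a' b' : V, c a' + ((T.dist a' b' : ℝ) : EReal) + c b' ≤
      c a + ((T.dist a b : ℝ) : EReal) + c b) :
    ∀ u : V, (⨆ y : V, (((T.dist u y : ℝ) : EReal) + c y)) =
      max (((T.dist u a : ℝ) : EReal) + c a) (((T.dist u b : ℝ) : EReal) + c b) := by
  classical
  intro u
  by_cases hbot : c a = ⊥ ∨ c b = ⊥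
  · -- degenerate case: all costs are ⊥
    have hall : ∀ y : V, c y = ⊥ := by
      intro y
      have h := hab y y
      have hrhs : c a + ((T.dist a b : ℝ) : EReal) + c b = ⊥ := by
        rcases hbot with h' | h'
        · rw [h', EReal.bot_add, EReal.bot_add]
        · rw [h', EReal.add_bot]
      rw [hrhs, SimpleGraph.dist_self] at h
      have h' : c y + c y ≤ (⊥ : EReal) := by
        simpa using h
      rcases EReal.add_eq_bot_iff.mp (le_bot_iff.mp h') with h'' | h'' <;> exact h''
    simp [hall, EReal.add_bot]
  · push_neg at hbot
    obtain ⟨hca, hcb⟩ := hbot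
    obtain ⟨ca, hcaR⟩ : ∃ r : ℝ, c a = (r : EReal) := ⟨(c a).toReal, (EReal.coe_toReal (hcTop a) hca).symm⟩
    obtain ⟨cb, hcbR⟩ : ∃ r : ℝ, c b = (r : EReal) := ⟨(c b).toReal, (EReal.coe_toReal (hcTop b) hcb).symm⟩
    -- two consequences of the diametral hypothesis with one endpoint cancelled
    have ha' : ∀ y : V, ((T.dist a y : ℝ) : EReal) + c y ≤ ((T.dist a b : ℝ) : EReal) + c b := by
      intro y
      have h := hab a y
      rw [hcaR, add_assoc, add_assoc] at h
      exact ereal_cancel_left ca h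
    have hb' : ∀ y : V, c y + ((T.dist y b : ℝ) : EReal) ≤ c a + ((T.dist a b : ℝ) : EReal) := by
      intro y
      have h := hab y b
      rw [hcbR] at h
      exact ereal_cancel_right cb h
    -- the diametral path
    obtain ⟨P, hP, _⟩ := hT.isConnected.exists_path_of_dist a b
    obtain ⟨m, hmP, F1u, F2u⟩ := tree_proj_s8 hT P hP u
    have Sm : T.dist a m + T.dist m b = T.dist a b := tree_split_dist hT P hP hmP
    refine le_antisymm (iSup_le fun y => ?_) (max_le (le_iSup (fun y => ((T.dist u y : ℝ) : EReal) + c y) a) (le_iSup (fun y => ((T.dist u y : ℝ) : EReal) + c y) b))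
    obtain ⟨m', hm'P, F1y, F2y⟩ := tree_proj_s8 hT P hP y
    have Sm' : T.dist a m' + T.dist m' b = T.dist a b := tree_split_dist hT P hP hm'P
    have tri1 : T.dist u y ≤ T.dist u m' + T.dist m' y := hT.isConnected.dist_triangle
    have tri2 : T.dist u m' ≤ T.dist u m + T.dist m m' := hT.isConnected.dist_triangle
    have cma : T.dist m a = T.dist a m := SimpleGraph.dist_comm
    have cm'a : T.dist m' a = T.dist a m' := SimpleGraph.dist_comm
    have cmm' : T.dist m m' = T.dist m' m := SimpleGraph.dist_comm
    have cym' : T.dist y m' = T.dist m' y := SimpleGraph.dist_comm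
    have cay : T.dist a y = T.dist y a := SimpleGraph.dist_comm
    rcases tree_collinear hT P hP hmP hm'P with hcase | hcase
    · -- m' is between a and m : the bound is attained at a
      refine le_trans ?_ (le_max_left _ _)
      have e1 : ((T.dist m' y : ℝ) : EReal) + c y ≤ ((T.dist m' a : ℝ) : EReal) + c a := by
        have h := hb' y
        rw [← F2y, ← Sm', D_add, D_add, ← add_assoc, ← add_assoc] at h
        have h' := ereal_cancel_right _ h
        calc ((T.dist m' y : ℝ) : EReal) + c y = c y + ((T.dist y m' : ℝ) : EReal) := by
              rw [cym', add_comm]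
          _ ≤ c a + ((T.dist a m' : ℝ) : EReal) := h'
          _ = ((T.dist m' a : ℝ) : EReal) + c a := by rw [cm'a, add_comm]
      have n2 : T.dist u m' + T.dist m' a ≤ T.dist u a := by omega
      exact ereal_chain tri1 e1 n2
    · -- m is between a and m' : the bound is attained at b
      refine le_trans ?_ (le_max_right _ _)
      have e2 : ((T.dist m' y : ℝ) : EReal) + c y ≤ ((T.dist m' b : ℝ) : EReal) + c b := by
        have h := ha' y
        have hay : T.dist a y = T.dist a m' + T.dist m' y := by omega
        rw [hay, ← Sm', D_add, D_add, add_assoc, add_assoc] at h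
        exact ereal_cancel_left _ h
      have n3 : T.dist u m' + T.dist m' b ≤ T.dist u b := by omega
      exact ereal_chain tri1 e2 n3
end

section
/- Fix a vertex x of T and let r = z_1, …, z_h be the proper ancestors of x in root-to-x order (so d_T(z_s, z_{s'}) = |s − s'|). Let the failing edge be e = (z_i, v) where v is the child of z_i on the path to x, so that Y(x,e) = ⋃_{k=1,…,i} Y(x|z_k); assume Y(x,e) ≠ ∅. Let γ_x be a vertex with lca(γ_x, x) = z_j for some j ∈ {1,…,i}. Let t' minimize d_T(λ(z_s), z_s) − s over s ∈ {1,…,j−1} with Y(x|z_s) ≠ ∅, and let t minimize d_T(λ(z_s), z_s) + s over s ∈ {j+1,…,i} with Y(x|z_s) ≠ ∅ (either may be undefined if the range contains no such s). If y_x minimizes d_T(y, γ_x) over the defined candidates y ∈ {λ(γ_x), λ(z_{t'}), λ(z_t)} (where λ(γ_x) is defined only if Y(x|z_j) ≠ ∅), then y_x minimizes d_T(y, γ_x) over all y ∈ Y(x,e). -/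
open SimpleGraph

/-- `z` is a proper ancestor of `y` in the tree `T` rooted at `r`. -/
def ProperAncestor {V : Type*} (T : SimpleGraph V) (r z y : V) : Prop :=
  z ≠ y ∧ OnPath T r z y

/-- `S(e)`: the set of swap edges of a tree edge `e`, i.e. the edges of `G` other than `e`
whose endpoints lie in different connected components of `T - e`. -/
def swapEdges {V : Type*} (G T : SimpleGraph V) (e : Sym2 V) : Set (Sym2 V) :=
  {f | f ∈ G.edgeSet ∧ f ≠ e ∧
    ∃ x y : V, f = s(x, y) ∧ ¬ (T.deleteEdges {e}).Reachable x y}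

/-- `E(x)`: the set of non-tree edges of the form `(x,y)` where `x` is not a proper
ancestor of `y` in `T` rooted at `r`. -/
def candEdges {V : Type*} (G T : SimpleGraph V) (r x : V) : Set (Sym2 V) :=
  {f | f ∈ G.edgeSet ∧ f ∉ T.edgeSet ∧
    ∃ y : V, f = s(x, y) ∧ ¬ ProperAncestor T r x y}

/-- `T_{e/f}`: the swap tree obtained from `T` by replacing `e` with `f`. -/
def swapTree {V : Type*} (T : SimpleGraph V) (e f : Sym2 V) : SimpleGraph V :=
  SimpleGraph.fromEdgeSet ((T.edgeSet \ {e}) ∪ {f})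

/-- The stretch factor `σ_H(T')` of a spanning tree `T'` of `H`. -/
noncomputable def stretch {V : Type*} (H T' : SimpleGraph V) : ℝ :=
  sSup {q : ℝ | ∃ x y : V, x ≠ y ∧ q = (T'.dist x y : ℝ) / (H.dist x y : ℝ)}

/-- `w` is the least common ancestor of `u` and `v` in the tree `T` rooted at `r`:
`w` lies on the paths from `r` to `u`, from `r` to `v`, and from `u` to `v`. -/
def IsLCA {V : Type*} (T : SimpleGraph V) (r u v w : V) : Prop :=
  T.dist r u = T.dist r w + T.dist w u ∧
  T.dist r v = T.dist r w + T.dist w v ∧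
  T.dist u v = T.dist u w + T.dist w v

section AuxTreeMetric

variable {V : Type*} [DecidableEq V] {T : SimpleGraph V}

lemma aux_exists_shorter {u v : V} (w : T.Walk u v) (hw : ¬ w.IsPath) :
    ∃ w' : T.Walk u v, w'.length < w.length := by
  induction w with
  | nil => exact absurd Walk.IsPath.nil hw
  | @cons u u' v h p ih =>
    by_cases hp : p.IsPath
    · have hu : u ∈ p.support := by
        by_contra hu
        exact hw (hp.cons hu)
      refine ⟨p.dropUntil u hu, lt_of_le_of_lt (Walk.length_dropUntil_le p hu) ?_⟩
      simp [Walk.length_cons]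
    · obtain ⟨w', hlt⟩ := ih hp
      exact ⟨Walk.cons h w', by simpa using Nat.succ_lt_succ hlt⟩

lemma aux_isPath_of_length_eq_dist {u v : V} (w : T.Walk u v)
    (hw : w.length = T.dist u v) : w.IsPath := by
  by_contra hnp
  obtain ⟨w', hlt⟩ := aux_exists_shorter w hnp
  have := SimpleGraph.dist_le w'
  omega

lemma aux_path_length (hT : T.IsTree) {u v : V} (p : T.Walk u v) (hp : p.IsPath) :
    p.length = T.dist u v := by
  obtain ⟨w, hw⟩ := (hT.isConnected.preconnected u v).exists_walk_length_eq_dist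
  have hbp : w.bypass.IsPath := w.bypass_isPath
  have h1 : w.bypass.length ≤ w.length := w.length_bypass_le
  have h2 : T.dist u v ≤ w.bypass.length := SimpleGraph.dist_le _
  have hpe : p = w.bypass :=
    congrArg Subtype.val (hT.IsAcyclic.path_unique ⟨p, hp⟩ ⟨w.bypass, hbp⟩)
  rw [hpe]; omega

lemma aux_exists_path (hT : T.IsTree) (u v : V) :
    ∃ p : T.Walk u v, p.IsPath ∧ p.length = T.dist u v := by
  obtain ⟨w, _⟩ := (hT.isConnected.preconnected u v).exists_walk_length_eq_dist
  exact ⟨w.bypass, w.bypass_isPath, aux_path_length hT _ w.bypass_isPath⟩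

lemma aux_split (hT : T.IsTree) {u v c : V} (p : T.Walk u v) (hp : p.IsPath)
    (hc : c ∈ p.support) : T.dist u c + T.dist c v = T.dist u v := by
  have h1 := aux_path_length hT _ (hp.takeUntil hc)
  have h2 := aux_path_length hT _ (hp.dropUntil hc)
  have h3 := congrArg Walk.length (p.take_spec hc)
  rw [Walk.length_append] at h3
  rw [aux_path_length hT p hp] at h3
  omega

lemma aux_mem_path (hT : T.IsTree) {u v a : V}
    (hB : T.dist u a + T.dist a v = T.dist u v) (p : T.Walk u v) (hp : p.IsPath) :
    a ∈ p.support := by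
  obtain ⟨p1, hp1, hl1⟩ := aux_exists_path hT u a
  obtain ⟨p2, hp2, hl2⟩ := aux_exists_path hT a v
  have hW : (p1.append p2).length = T.dist u v := by rw [Walk.length_append]; omega
  have hWp : (p1.append p2).IsPath := aux_isPath_of_length_eq_dist _ hW
  have hpe : p = p1.append p2 :=
    congrArg Subtype.val (hT.IsAcyclic.path_unique ⟨p, hp⟩ ⟨_, hWp⟩)
  rw [hpe, Walk.mem_support_append_iff]
  exact Or.inl (Walk.end_mem_support p1)

lemma aux_glue (hT : T.IsTree) {y a b w : V} (hab : a ≠ b)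
    (h1 : T.dist y a + T.dist a b = T.dist y b)
    (h2 : T.dist a b + T.dist b w = T.dist a w) :
    T.dist y b + T.dist b w = T.dist y w := by
  have hconn := hT.isConnected
  obtain ⟨P, hP, hPl⟩ := aux_exists_path hT y b
  obtain ⟨Q, hQ, hQl⟩ := aux_exists_path hT b w
  have haP : a ∈ P.support := aux_mem_path hT h1 P hP
  have hdisj : ∀ c, c ∈ P.support → c ∈ Q.support → c = b := by
    intro c hcP hcQ
    by_contra hcb
    have s1 : T.dist y c + T.dist c b = T.dist y b := aux_split hT P hP hcP
    have s2 : T.dist b c + T.dist c w = T.dist b w := aux_split hT Q hQ hcQ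
    have t1 : T.dist a w ≤ T.dist a c + T.dist c w := hconn.dist_triangle
    have t2 : T.dist a c ≤ T.dist a b + T.dist b c := hconn.dist_triangle
    have h3 : T.dist a c = T.dist a b + T.dist b c := by omega
    have hm : a ∈ ((P.takeUntil c hcP).append (P.dropUntil c hcP)).support := by
      rw [P.take_spec hcP]; exact haP
    have ccb : T.dist c b = T.dist b c := SimpleGraph.dist_comm ..
    have cca : T.dist c a = T.dist a c := SimpleGraph.dist_comm ..
    rcases (Walk.mem_support_append_iff _ _).1 hm with hcase | hcase
    · have s3 : T.dist y a + T.dist a c = T.dist y c :=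
        aux_split hT _ (hP.takeUntil hcP) hcase
      have hcb0 : T.dist c b = 0 := by omega
      exact hcb ((hconn.preconnected c b).dist_eq_zero_iff.mp hcb0)
    · have s4 : T.dist c a + T.dist a b = T.dist c b :=
        aux_split hT _ (hP.dropUntil hcP) hcase
      have hab0 : T.dist a b = 0 := by omega
      exact hab ((hconn.preconnected a b).dist_eq_zero_iff.mp hab0)
  have hU : (P.append Q).IsPath := by
    rw [Walk.isPath_def, Walk.support_append]
    refine List.Nodup.append hP.support_nodup hQ.support_nodup.tail ?_
    intro c hcP hcQt
    have hcQ : c ∈ Q.support := List.mem_of_mem_tail hcQt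
    have hceb : c = b := hdisj c hcP hcQ
    subst hceb
    have hnd := hQ.support_nodup
    rw [Q.support_eq_cons] at hnd
    exact (List.nodup_cons.mp hnd).1 hcQt
  have := aux_path_length hT _ hU
  rw [Walk.length_append, hPl, hQl] at this
  exact this
lemma aux_keyformula (hT : T.IsTree) {r x a b y w : V}
    (h1 : T.dist r x = T.dist r a + T.dist a x)
    (h2 : T.dist r x = T.dist r b + T.dist b x)
    (hrb : T.dist r b = T.dist r a + T.dist a b)
    (hy1 : T.dist r y = T.dist r a + T.dist a y)
    (hy2 : T.dist x y = T.dist x a + T.dist a y)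
    (hw1 : T.dist r w = T.dist r b + T.dist b w)
    (hab : a ≠ b) :
    T.dist y w = T.dist y a + T.dist a b + T.dist b w := by
  have hconn := hT.isConnected
  have cxa : T.dist x a = T.dist a x := SimpleGraph.dist_comm ..
  have cxb : T.dist x b = T.dist b x := SimpleGraph.dist_comm ..
  have cay : T.dist a y = T.dist y a := SimpleGraph.dist_comm ..
  have cby : T.dist b y = T.dist y b := SimpleGraph.dist_comm ..
  have t1 : T.dist y b ≤ T.dist y a + T.dist a b := hconn.dist_triangle
  have t2 : T.dist x y ≤ T.dist x b + T.dist b y := hconn.dist_triangle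
  have B1 : T.dist y a + T.dist a b = T.dist y b := by omega
  have t3 : T.dist a w ≤ T.dist a b + T.dist b w := hconn.dist_triangle
  have t4 : T.dist r w ≤ T.dist r a + T.dist a w := hconn.dist_triangle
  have B2 : T.dist a b + T.dist b w = T.dist a w := by omega
  have hg := aux_glue hT hab B1 B2
  omega

end AuxTreeMetric

/-- With `z 1, …, z h` the proper ancestors of `x` in root-to-`x` order,
failing edge `e = (z i, v)`, `γ_x` with `lca(γ_x, x) = z j`, labels `λ`, and `t', t` the
argmins of `d_T(λ(z s), z s) ∓ s` over the nonempty ranges `[1, j-1]` and `[j+1, i]`: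
any `y_x` minimizing `d_T(y, γ_x)` over the defined candidates
`{λ(γ_x), λ(z t'), λ(z t)}` minimizes `d_T(y, γ_x)` over all of `Y(x,e)`. -/
theorem stmt_9 {V : Type*} [Fintype V] (G T : SimpleGraph V) (r : V)
    (hT : T.IsTree) (hsub : T ≤ G)
    (x : V) (h i j : ℕ) (z : ℕ → V)
    (hz1 : z 1 = r)
    (hanc : ∀ s, 1 ≤ s → s ≤ h → ProperAncestor T r (z s) x)
    (hall : ∀ w : V, ProperAncestor T r w x → ∃ s, 1 ≤ s ∧ s ≤ h ∧ z s = w)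
    (hdist : ∀ s s', 1 ≤ s → s ≤ s' → s' ≤ h → T.dist (z s) (z s') = s' - s)
    (hj1 : 1 ≤ j) (hji : j ≤ i) (hih : i ≤ h)
    (v : V) (e : Sym2 V) (he : e = s(z i, v))
    (hv : T.Adj (z i) v ∧ OnPath T r v x)
    (Yz : ℕ → Set V)
    (hYz : ∀ s, Yz s = {y : V | s(x, y) ∈ candEdges G T r x ∧ IsLCA T r x y (z s)})
    (Yxe : Set V)
    (hYxe : Yxe = {y : V | s(x, y) ∈ candEdges G T r x ∩ swapEdges G T e})
    (hUnion : Yxe = ⋃ s ∈ Finset.Icc 1 i, Yz s)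
    (hne : Yxe.Nonempty)
    (γ : V) (hγ : IsLCA T r x γ (z j))
    (lab : V → V)
    (hlab : ∀ s, 1 ≤ s → s ≤ h → (Yz s).Nonempty →
      ∀ y' : V, IsLCA T r x y' (z s) →
        lab y' ∈ Yz s ∧ ∀ y ∈ Yz s, T.dist (lab y') y' ≤ T.dist y y')
    (t t' : ℕ)
    (ht' : (∃ s, 1 ≤ s ∧ s < j ∧ (Yz s).Nonempty) →
      1 ≤ t' ∧ t' < j ∧ (Yz t').Nonempty ∧
      ∀ s, 1 ≤ s → s < j → (Yz s).Nonempty →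
        (T.dist (lab (z t')) (z t') : ℤ) - (t' : ℤ) ≤
          (T.dist (lab (z s)) (z s) : ℤ) - (s : ℤ))
    (ht : (∃ s, j < s ∧ s ≤ i ∧ (Yz s).Nonempty) →
      j < t ∧ t ≤ i ∧ (Yz t).Nonempty ∧
      ∀ s, j < s → s ≤ i → (Yz s).Nonempty →
        (T.dist (lab (z t)) (z t) : ℤ) + (t : ℤ) ≤
          (T.dist (lab (z s)) (z s) : ℤ) + (s : ℤ))
    (cand : Set V)
    (hcand : cand = {w : V | ((Yz j).Nonempty ∧ w = lab γ) ∨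
      ((∃ s, 1 ≤ s ∧ s < j ∧ (Yz s).Nonempty) ∧ w = lab (z t')) ∨
      ((∃ s, j < s ∧ s ≤ i ∧ (Yz s).Nonempty) ∧ w = lab (z t))})
    (yx : V) (hyxc : yx ∈ cand) (hyx : ∀ w ∈ cand, T.dist yx γ ≤ T.dist w γ) :
    yx ∈ Yxe ∧ ∀ y ∈ Yxe, T.dist yx γ ≤ T.dist y γ := by
  
  classical
  have hconn := hT.isConnected
  have hjh : j ≤ h := le_trans hji hih
  have hdrz : ∀ s, 1 ≤ s → s ≤ h → T.dist r (z s) = s - 1 := by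
    intro s h1s hsh
    have hd := hdist 1 s le_rfl h1s hsh
    rwa [hz1] at hd
  have hzne : ∀ s s', 1 ≤ s → s < s' → s' ≤ h → z s ≠ z s' := by
    intro s s' h1s hss' hs'h heq
    have hd := hdist s s' h1s (le_of_lt hss') hs'h
    rw [heq, SimpleGraph.dist_self] at hd
    omega
  have formula : ∀ s y', 1 ≤ s → s ≤ i → s ≠ j → IsLCA T r x y' (z s) →
      T.dist y' γ = T.dist y' (z s) + T.dist (z s) (z j) + T.dist (z j) γ := by
    intro s y' h1s hsi hsj hlca
    obtain ⟨hl1, hl2, hl3⟩ := hlca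
    obtain ⟨hg1, hg2, hg3⟩ := hγ
    have hsh : s ≤ h := le_trans hsi hih
    have hrs := hdrz s h1s hsh
    have hrj := hdrz j hj1 hjh
    have hrx_s : T.dist r x = T.dist r (z s) + T.dist (z s) x := ((hanc s h1s hsh).2).symm
    have hrx_j : T.dist r x = T.dist r (z j) + T.dist (z j) x := ((hanc j hj1 hjh).2).symm
    rcases lt_or_gt_of_ne hsj with hlt | hgt
    · have hdsj := hdist s j h1s (le_of_lt hlt) hjh
      have hrb : T.dist r (z j) = T.dist r (z s) + T.dist (z s) (z j) := by omega
      have hne := hzne s j h1s hlt hjh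
      exact aux_keyformula hT hrx_s hrx_j hrb hl2 hl3 hg2 hne
    · have hdjs := hdist j s hj1 (le_of_lt hgt) hsh
      have hrb : T.dist r (z s) = T.dist r (z j) + T.dist (z j) (z s) := by omega
      have hne := hzne j s hj1 hgt hsh
      have key := aux_keyformula hT hrx_j hrx_s hrb hg2 hg3 hl2 hne
      have c1 : T.dist γ y' = T.dist y' γ := SimpleGraph.dist_comm ..
      have c2 : T.dist γ (z j) = T.dist (z j) γ := SimpleGraph.dist_comm ..
      have c3 : T.dist (z j) (z s) = T.dist (z s) (z j) := SimpleGraph.dist_comm ..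
      have c4 : T.dist (z s) y' = T.dist y' (z s) := SimpleGraph.dist_comm ..
      omega
  have hYsub : ∀ s, 1 ≤ s → s ≤ i → Yz s ⊆ Yxe := by
    intro s h1s hsi y' hy'
    rw [hUnion]
    exact Set.mem_iUnion₂.mpr ⟨s, Finset.mem_Icc.mpr ⟨h1s, hsi⟩, hy'⟩
  have hself : ∀ s, 1 ≤ s → s ≤ h → IsLCA T r x (z s) (z s) := by
    intro s h1s hsh
    exact ⟨((hanc s h1s hsh).2).symm, by simp [SimpleGraph.dist_self],
      by simp [SimpleGraph.dist_self]⟩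
  have hmem : yx ∈ Yxe := by
    rw [hcand] at hyxc
    simp only [Set.mem_setOf_eq] at hyxc
    rcases hyxc with ⟨hnej, rfl⟩ | ⟨hex, rfl⟩ | ⟨hex, rfl⟩
    · exact hYsub j hj1 hji ((hlab j hj1 hjh hnej γ hγ).1)
    · obtain ⟨h1t', ht'j, ht'ne, _⟩ := ht' hex
      have ht'h : t' ≤ h := le_trans (le_trans (le_of_lt ht'j) hji) hih
      exact hYsub t' h1t' (le_trans (le_of_lt ht'j) hji)
        ((hlab t' h1t' ht'h ht'ne (z t') (hself t' h1t' ht'h)).1)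
    · obtain ⟨hjt, hti, htne, _⟩ := ht hex
      have h1t : 1 ≤ t := le_trans hj1 (le_of_lt hjt)
      have hth : t ≤ h := le_trans hti hih
      exact hYsub t h1t hti ((hlab t h1t hth htne (z t) (hself t h1t hth)).1)
  refine ⟨hmem, ?_⟩
  intro y hy
  rw [hUnion] at hy
  obtain ⟨s, hsmem, hys⟩ := Set.mem_iUnion₂.mp hy
  obtain ⟨h1s, hsi⟩ := Finset.mem_Icc.mp hsmem
  have hylca : IsLCA T r x y (z s) := by
    have hm := hys
    rw [hYz s] at hm
    exact hm.2
  rcases lt_trichotomy s j with hlt | heq | hgt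
  · have hex : ∃ s', 1 ≤ s' ∧ s' < j ∧ (Yz s').Nonempty := ⟨s, h1s, hlt, ⟨y, hys⟩⟩
    obtain ⟨h1t', ht'j, ht'ne, ht'min⟩ := ht' hex
    have hcm : lab (z t') ∈ cand := by
      rw [hcand]; right; left; exact ⟨hex, rfl⟩
    have hyxle := hyx _ hcm
    have ht'h : t' ≤ h := le_trans (le_trans (le_of_lt ht'j) hji) hih
    have hlabt' := hlab t' h1t' ht'h ht'ne (z t') (hself t' h1t' ht'h)
    have hlt'lca : IsLCA T r x (lab (z t')) (z t') := by
      have hm := hlabt'.1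
      rw [hYz t'] at hm
      exact hm.2
    have f1 := formula t' (lab (z t')) h1t' (le_trans (le_of_lt ht'j) hji)
      (ne_of_lt ht'j) hlt'lca
    have f2 := formula s y h1s hsi (ne_of_lt hlt) hylca
    have d1 := hdist t' j h1t' (le_of_lt ht'j) hjh
    have d2 := hdist s j h1s (le_of_lt hlt) hjh
    have hmins := ht'min s h1s hlt ⟨y, hys⟩
    have hsh : s ≤ h := le_trans hsi hih
    have hlabs := (hlab s h1s hsh ⟨y, hys⟩ (z s) (hself s h1s hsh)).2 y hys
    omega
  · subst heq
    have hnej : (Yz s).Nonempty := ⟨y, hys⟩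
    have hcm : lab γ ∈ cand := by rw [hcand]; left; exact ⟨hnej, rfl⟩
    exact le_trans (hyx _ hcm) ((hlab s hj1 hjh hnej γ hγ).2 y hys)
  · have hex : ∃ s', j < s' ∧ s' ≤ i ∧ (Yz s').Nonempty := ⟨s, hgt, hsi, ⟨y, hys⟩⟩
    obtain ⟨hjt, hti, htne, htmin⟩ := ht hex
    have hcm : lab (z t) ∈ cand := by
      rw [hcand]; right; right; exact ⟨hex, rfl⟩
    have hyxle := hyx _ hcm
    have h1t : 1 ≤ t := le_trans hj1 (le_of_lt hjt)
    have hth : t ≤ h := le_trans hti hih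
    have hlabt := hlab t h1t hth htne (z t) (hself t h1t hth)
    have hltlca : IsLCA T r x (lab (z t)) (z t) := by
      have hm := hlabt.1
      rw [hYz t] at hm
      exact hm.2
    have f1 := formula t (lab (z t)) h1t hti (Ne.symm (ne_of_lt hjt)) hltlca
    have f2 := formula s y h1s hsi (Ne.symm (ne_of_lt hgt)) hylca
    have d1 := hdist j t hj1 (le_of_lt hjt) hth
    have d2 := hdist j s hj1 (le_of_lt hgt) (le_trans hsi hih)
    have c1 : T.dist (z t) (z j) = T.dist (z j) (z t) := SimpleGraph.dist_comm ..
    have c2 : T.dist (z s) (z j) = T.dist (z j) (z s) := SimpleGraph.dist_comm ..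
    have hmins := htmin s hgt hsi ⟨y, hys⟩
    have hsh : s ≤ h := le_trans hsi hih
    have hlabs := (hlab s h1s hsh ⟨y, hys⟩ (z s) (hself s h1s hsh)).2 y hys
    omega
end
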